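/- For real numbers ξ̂_1,…,ξ̂_J, penalties ω_1,…,ω_J, and target ξ, the estimator ξ̂ = max_{1≤k≤J} (ξ̂_k − ω_k) satisfies (ξ̂ − ξ)² ≤ min_{1≤k≤J} (ξ̂_k − ω_k − ξ)² + Σ_{k=1}^J ((ξ̂_k − ω_k − ξ)_+)². -/
import Mathlib


/-- For real numbers ξ̂_1,…,ξ̂_J, penalties ω_1,…,ω_J, and target ξ, the
estimator ξ̂ = max_{1≤k≤J} (ξ̂_k − ω_k) satisfies
(ξ̂ − ξ)² ≤ min_{1≤k≤J} (ξ̂_k − ω_k − ξ)² + Σ_{k=1}^J ((ξ̂_k − ω_k − ξ)_+)². -/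
theorem penalized_max_risk_bound (J : ℕ) (hJ : 0 < J)
    (xihat ω : Fin J → ℝ) (ξ : ℝ) :
    haveI : Nonempty (Fin J) := Fin.pos_iff_nonempty.mp hJ
    ((Finset.univ.sup' Finset.univ_nonempty (fun k => xihat k - ω k)) - ξ) ^ 2
      ≤ (Finset.univ.inf' Finset.univ_nonempty
            (fun k => (xihat k - ω k - ξ) ^ 2))
        + ∑ k, (max (xihat k - ω k - ξ) 0) ^ 2 := by
  haveI : Nonempty (Fin J) := Fin.pos_iff_nonempty.mp hJ
  obtain ⟨j, -, hj⟩ := Finset.exists_mem_eq_sup' (Finset.univ_nonempty (α := Fin J))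
    (fun k => xihat k - ω k)
  have hinf_nonneg : 0 ≤ Finset.univ.inf' Finset.univ_nonempty
      (fun k => (xihat k - ω k - ξ) ^ 2) :=
    Finset.le_inf' _ _ (fun k _ => by positivity)
  have hsum_nonneg : 0 ≤ ∑ k, (max (xihat k - ω k - ξ) 0) ^ 2 :=
    Finset.sum_nonneg fun k _ => by positivity
  rw [hj]
  rcases le_or_gt ξ (xihat j - ω j) with hle | hlt
  · have h1 : (xihat j - ω j - ξ) ^ 2 = (max (xihat j - ω j - ξ) 0) ^ 2 := by
      rw [max_eq_left (by linarith)]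
    have h2 : (max (xihat j - ω j - ξ) 0) ^ 2
        ≤ ∑ k, (max (xihat k - ω k - ξ) 0) ^ 2 :=
      Finset.single_le_sum (f := fun k => (max (xihat k - ω k - ξ) 0) ^ 2)
        (fun k _ => by positivity) (Finset.mem_univ j)
    linarith
  · have h1 : (xihat j - ω j - ξ) ^ 2 ≤ Finset.univ.inf' Finset.univ_nonempty
        (fun k => (xihat k - ω k - ξ) ^ 2) := by
      apply Finset.le_inf'
      intro k _
      have hk : xihat k - ω k ≤ xihat j - ω j := by
        rw [← hj]
        exact Finset.le_sup' (fun k => xihat k - ω k) (Finset.mem_univ k)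
      nlinarith
    linarith
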